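/- Let S be a field (e.g., ℝ or ℂ) and X a vector space over S, viewed as an algebra for the finite multiset (free module) monad M_S. Then coalgebra structures b : X → M_S(X) for the induced comonad on S-modules are in bijective correspondence with (Hamel) bases of X: a basis B gives b(x) = the formal sum of the coordinates of x in B, and conversely the set {a ∈ X : b(a) = 1·a} of a coalgebra b is a linearly independent spanning set. -/

import Mathlib

/-- For a vector space `X` over a field `S`, viewed as an algebra of the finite multiset
(free module) monad `M_S` (`M_S X = X →₀ S`), coalgebras `b : X → M_S X` for the induced
comonad correspond to (Hamel) bases of `X`:
(i) every basis `B` yields a coalgebra `b` sending `v` to the formal sum of its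
coordinates w.r.t. `B` (satisfying the counit law `ε ∘ b = id` and the coassociativity
law `M_S(η) ∘ b = M_S(b) ∘ b`); and
(ii) conversely, for every coalgebra `b` (a linear map satisfying the counit and
coassociativity laws) the set `{a : X | b a = 1·a}` is linearly independent and spans. -/
theorem bases_as_coalgebras_stmt7 (S : Type u) [Field S]
    (X : Type v) [AddCommGroup X] [Module S X] :
    (∀ (ι : Type v) (B : Module.Basis ι S X),
      ∃ b : X →ₗ[S] (X →₀ S),
        (∀ v : X, b v = Finsupp.mapDomain B (B.repr v)) ∧
        (∀ v : X, (b v).sum (fun x r => r • x) = v) ∧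
        (∀ v : X, Finsupp.mapDomain (fun x => Finsupp.single x (1 : S)) (b v) =
          Finsupp.mapDomain (⇑b) (b v))) ∧
    (∀ b : X →ₗ[S] (X →₀ S),
      (∀ v : X, (b v).sum (fun x r => r • x) = v) →
      (∀ v : X, Finsupp.mapDomain (fun x => Finsupp.single x (1 : S)) (b v) =
        Finsupp.mapDomain (⇑b) (b v)) →
      LinearIndependent S ((↑) : {a : X // b a = Finsupp.single a 1} → X) ∧
      Submodule.span S {a : X | b a = Finsupp.single a 1} = ⊤) := by
  classical
  constructor
  · intro ι B
    refine ⟨Finsupp.lmapDomain S S B ∘ₗ (B.repr : X →ₗ[S] (ι →₀ S)),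
      fun v => rfl, ?_, ?_⟩
    · intro v
      simp only [LinearMap.comp_apply, LinearEquiv.coe_coe, Finsupp.lmapDomain_apply]
      rw [Finsupp.sum_mapDomain_index (by simp) (by intros; rw [add_smul])]
      exact B.linearCombination_repr v
    · intro v
      simp only [LinearMap.comp_apply, LinearEquiv.coe_coe, Finsupp.lmapDomain_apply]
      rw [← Finsupp.mapDomain_comp, ← Finsupp.mapDomain_comp]
      congr 1
      funext i
      simp [Function.comp, Finsupp.mapDomain_single]
  · intro b hcounit hcoassoc
    have hinj : Function.Injective (fun a : X => Finsupp.single a (1 : S)) :=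
      Finsupp.single_left_injective one_ne_zero
    have key : ∀ v : X, ∀ x ∈ (b v).support, b x = Finsupp.single x 1 := by
      intro v x hx
      have hL : Finsupp.mapDomain (fun x => Finsupp.single x (1 : S)) (b v)
          (Finsupp.single x 1) = b v x := Finsupp.mapDomain_apply hinj _ _
      have h2 : Finsupp.mapDomain (⇑b) (b v) (Finsupp.single x 1) ≠ 0 := by
        rw [← hcoassoc v, hL]; exact Finsupp.mem_support_iff.mp hx
      have h3 : Finsupp.single x (1 : S) ∈ (Finsupp.mapDomain (⇑b) (b v)).support :=
        Finsupp.mem_support_iff.mpr h2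
      obtain ⟨y, hy, hby⟩ := Finset.mem_image.mp (Finsupp.mapDomain_support h3)
      have hyx : y = x := by
        have hc := hcounit y
        rw [hby, Finsupp.sum_single_index (by simp), one_smul] at hc
        exact hc.symm
      rwa [hyx] at hby
    classical
  constructor
    · have h1 : LinearIndependent S
          (fun a : {a : X // b a = Finsupp.single a 1} => Finsupp.single (a : X) (1 : S)) := by
        have := (Finsupp.basisSingleOne (R := S) (ι := X)).linearIndependent.comp
          (fun a : {a : X // b a = Finsupp.single a 1} => (a : X)) Subtype.val_injective
        exact this
      apply LinearIndependent.of_comp b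
      have h2 : (⇑b ∘ ((↑) : {a : X // b a = Finsupp.single a 1} → X)) =
          fun a : {a : X // b a = Finsupp.single a 1} => Finsupp.single (a : X) (1 : S) := by
        funext a; exact a.2
      rw [h2]; exact h1
    · rw [eq_top_iff]
      intro v _
      rw [← hcounit v]
      apply Submodule.sum_mem
      intro x hx
      exact Submodule.smul_mem _ _ (Submodule.subset_span (key v x hx))
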